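/- arXiv:1611.08176 — 4 statements merged into one kernel-verified Lean document; each statement's English description precedes it below -/
import Mathlib

section
/- Let X, Y be real Hilbert spaces with Y continuously and densely embedded in X and ‖y‖_X ≤ ‖y‖_Y for all y ∈ Y. Suppose ‖y‖_Y = sup over nonzero v ∈ X of (y,v)_X / ‖v‖_{Y'}, where ‖·‖_{Y'} is the dual norm in the Gelfand triple Y ⊂ X ⊂ Y'. Then for any R > 0 the closed ball B_R = {y ∈ Y : ‖y‖_Y ≤ R} is a closed subset of X with respect to the X-norm: if (y_n) ⊂ B_R converges in X to x, then x ∈ Y and ‖x‖_Y ≤ R. -/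
open RealInnerProductSpace

/-- Kato's Lemma 7.3: under the Gelfand-triple norm formula, `Y`-norm balls are closed
in the `X`-norm. `J : Y →L[ℝ] X` is the dense continuous embedding, `N : X → ℝ` is the
dual norm of the Gelfand triple `Y ⊂ X ⊂ Y'`. -/
theorem stmt0
    {X Y : Type*} [NormedAddCommGroup X] [InnerProductSpace ℝ X] [CompleteSpace X]
    [NormedAddCommGroup Y] [InnerProductSpace ℝ Y] [CompleteSpace Y]
    (J : Y →L[ℝ] X) (hJinj : Function.Injective J)
    (hJdense : DenseRange J)
    (hJle : ∀ y : Y, ‖J y‖ ≤ ‖y‖)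
    (N : X → ℝ)
    (hN : ∀ v : X, N v = sSup {r : ℝ | ∃ y : Y, y ≠ 0 ∧ r = ⟪J y, v⟫ / ‖y‖})
    (hnorm : ∀ y : Y, ‖y‖ = sSup {r : ℝ | ∃ v : X, v ≠ 0 ∧ r = ⟪J y, v⟫ / N v}) :
    ∀ R : ℝ, 0 < R → ∀ (u : ℕ → Y) (x : X),
      (∀ n, ‖u n‖ ≤ R) →
      Filter.Tendsto (fun n => J (u n)) Filter.atTop (nhds x) →
      ∃ y : Y, J y = x ∧ ‖y‖ ≤ R := by
  intro R hR u x hu hconv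
  set S : X →L[ℝ] Y := ContinuousLinearMap.adjoint J with hS
  -- key bound
  have key : ∀ v : X, |⟪x, v⟫| ≤ R * ‖S v‖ := by
    intro v
    have htend : Filter.Tendsto (fun n => ⟪J (u n), v⟫) Filter.atTop (nhds ⟪x, v⟫) :=
      hconv.inner tendsto_const_nhds
    have hb : ∀ n, |⟪J (u n), v⟫| ≤ R * ‖S v‖ := by
      intro n
      have h1 : ⟪J (u n), v⟫ = ⟪S v, u n⟫ := by
        rw [hS, ContinuousLinearMap.adjoint_inner_left, real_inner_comm]
      rw [h1]
      calc |⟪S v, u n⟫| ≤ ‖S v‖ * ‖u n‖ := abs_real_inner_le_norm _ _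
        _ ≤ ‖S v‖ * R := by
            exact mul_le_mul_of_nonneg_left (hu n) (norm_nonneg _)
        _ = R * ‖S v‖ := mul_comm _ _
    have : |⟪x, v⟫| ≤ R * ‖S v‖ :=
      le_of_tendsto (htend.abs) (Filter.Eventually.of_forall hb)
    exact this
  -- well-definedness
  have wd : ∀ v w : X, S v = S w → ⟪x, v⟫ = ⟪x, w⟫ := by
    intro v w h
    have h0 : |⟪x, v - w⟫| ≤ R * ‖S (v - w)‖ := key _
    rw [map_sub, h, sub_self, norm_zero, mul_zero] at h0
    have := abs_nonpos_iff.mp h0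
    rw [inner_sub_right] at this
    linarith
  set p : Submodule ℝ Y := LinearMap.range (S : X →ₗ[ℝ] Y) with hp
  have hsel : ∀ z : p, ∃ v : X, S v = (z : Y) := fun z => z.2
  choose sel hselS using hsel
  have hwd : ∀ (z : p) (v : X), S v = (z : Y) → ⟪x, sel z⟫ = ⟪x, v⟫ := by
    intro z v hv
    exact wd _ _ (by rw [hselS z, hv])
  set fLin : p →ₗ[ℝ] ℝ :=
    { toFun := fun z => ⟪x, sel z⟫
      map_add' := by
        intro z₁ z₂
        show ⟪x, sel (z₁ + z₂)⟫ = ⟪x, sel z₁⟫ + ⟪x, sel z₂⟫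
        have : ⟪x, sel (z₁ + z₂)⟫ = ⟪x, sel z₁ + sel z₂⟫ := by
          apply hwd
          rw [map_add, hselS, hselS]; rfl
        rw [this, inner_add_right]
      map_smul' := by
        intro c z
        show ⟪x, sel (c • z)⟫ = c • ⟪x, sel z⟫
        have : ⟪x, sel (c • z)⟫ = ⟪x, c • sel z⟫ := by
          apply hwd
          rw [map_smul, hselS]; rfl
        rw [this, inner_smul_right]; rfl } with hfLin
  have hfbound : ∀ z : p, ‖fLin z‖ ≤ R * ‖z‖ := by
    intro z
    have h := key (sel z)
    rw [hselS z] at h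
    show ‖⟪x, sel z⟫‖ ≤ R * ‖(z : Y)‖
    rwa [Real.norm_eq_abs]
  set fCont : p →L[ℝ] ℝ := fLin.mkContinuous R hfbound with hfCont
  obtain ⟨g, hg, hgnorm⟩ := exists_extension_norm_eq p fCont
  set y : Y := (InnerProductSpace.toDual ℝ Y).symm g with hy
  have hyg : ∀ z : Y, ⟪y, z⟫ = g z := fun z => InnerProductSpace.toDual_symm_apply
  refine ⟨y, ?_, ?_⟩
  · apply ext_inner_right ℝ
    intro v
    have h1 : ⟪J y, v⟫ = ⟪y, S v⟫ := by
      rw [hS, ContinuousLinearMap.adjoint_inner_right]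
    have hmem : S v ∈ p := ⟨v, rfl⟩
    have h2 : g (S v) = fCont ⟨S v, hmem⟩ := hg ⟨S v, hmem⟩
    have h3 : (fCont ⟨S v, hmem⟩ : ℝ) = ⟪x, v⟫ := hwd ⟨S v, hmem⟩ v rfl
    rw [h1, hyg, h2, h3]
  · have hny : ‖y‖ = ‖g‖ := by
      rw [hy]; exact (InnerProductSpace.toDual ℝ Y).symm.norm_map g
    rw [hny, hgnorm]
    exact fLin.mkContinuous_norm_le (le_of_lt hR) hfbound
end

section
/- Let H be a real Hilbert space, let A, Ã be linear maps from a subspace Y ⊂ H to H, f, f̃ ∈ H, τ > 0, u_0 ∈ H. Suppose w, w̃ ∈ Y satisfy (w − u_0)/(τ/2) + A w = f and (w̃ − u_0)/(τ/2) + Ã w̃ = f̃, where Ã is accretive ((v, Ã v) ≥ 0 for all v ∈ Y). If |(Ã − A) w| ≤ L₁ and |f̃ − f| ≤ L₂, then |w̃ − w| ≤ (τ/2)(L₁ + L₂). -/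
open RealInnerProductSpace

/-- Contraction estimate for the fixed-point map of the fully implicit midpoint rule:
`w` solves the equation with operator `A` and rhs `f`, `wt` solves it with the accretive
operator `At` and rhs `ft`; then `|wt − w| ≤ (τ/2)(L₁ + L₂)`. -/
theorem stmt4
    {H : Type*} [NormedAddCommGroup H] [InnerProductSpace ℝ H]
    (Y : Submodule ℝ H) (A At : Y →ₗ[ℝ] H)
    (hacc : ∀ v : Y, 0 ≤ ⟪(v : H), At v⟫)
    (f ft u₀ : H) (τ : ℝ) (hτ : 0 < τ)
    (w wt : Y)
    (hw : (τ / 2)⁻¹ • ((w : H) - u₀) + A w = f)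
    (hwt : (τ / 2)⁻¹ • ((wt : H) - u₀) + At wt = ft)
    (L₁ L₂ : ℝ)
    (hL₁ : ‖At w - A w‖ ≤ L₁)
    (hL₂ : ‖ft - f‖ ≤ L₂) :
    ‖(wt : H) - (w : H)‖ ≤ (τ / 2) * (L₁ + L₂) := by
  set d : Y := wt - w with hd
  have hdc : (d : H) = (wt : H) - (w : H) := rfl
  have hτ2 : (0:ℝ) < τ / 2 := by linarith
  have key : (τ / 2)⁻¹ • (d : H) + At d = (ft - f) - (At w - A w) := by
    have := congrArg₂ (· - ·) hwt hw
    rw [hd, map_sub]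
    push_cast
    rw [smul_sub]
    rw [smul_sub, smul_sub] at this
    abel_nf
    abel_nf at this
    linear_combination (norm := module) this
  have hip : (τ / 2)⁻¹ * ‖(d : H)‖ ^ 2 ≤ ‖(d : H)‖ * (L₁ + L₂) := by
    have h1 : ⟪(d : H), (τ / 2)⁻¹ • (d : H) + At d⟫ =
        (τ / 2)⁻¹ * ‖(d : H)‖ ^ 2 + ⟪(d : H), At d⟫ := by
      rw [inner_add_right, real_inner_smul_right, real_inner_self_eq_norm_sq]
    have h2 : ⟪(d : H), (ft - f) - (At w - A w)⟫ ≤ ‖(d : H)‖ * (L₁ + L₂) := by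
      calc ⟪(d : H), (ft - f) - (At w - A w)⟫ ≤ ‖(d : H)‖ * ‖(ft - f) - (At w - A w)‖ :=
            real_inner_le_norm _ _
        _ ≤ ‖(d : H)‖ * (L₁ + L₂) := by
            apply mul_le_mul_of_nonneg_left _ (norm_nonneg _)
            calc ‖(ft - f) - (At w - A w)‖ ≤ ‖ft - f‖ + ‖At w - A w‖ := norm_sub_le _ _
              _ ≤ L₁ + L₂ := by linarith
    have h3 := hacc d
    rw [key] at h1
    linarith
  rw [← hdc]
  have hLpos : 0 ≤ L₁ + L₂ := by
    have := norm_nonneg (At w - A w); have := norm_nonneg (ft - f); linarith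
  rcases eq_or_lt_of_le (norm_nonneg (d : H)) with h0 | h0
  · rw [← h0]; positivity
  · rw [pow_two, ← mul_assoc, mul_comm ‖(d : H)‖ (L₁ + L₂)] at hip
    have h4 := le_of_mul_le_mul_right hip h0
    rw [inv_mul_le_iff₀ hτ2] at h4
    linarith
end

section
/- Let H be a real Hilbert space with inner product (·,·). Let 𝒜 be an invertible m×m real matrix that is coercive: vᵀ𝒟𝒜⁻¹v ≥ α vᵀ𝒟v for all v ∈ ℝᵐ, for some positive diagonal 𝒟 = diag(d_i) and α > 0. Let A_1, …, A_m be accretive linear operators on H ((w, A_i w) ≥ 0 on their domains). Let τ > 0. Then for any W = (W_1,…,W_m) with W_i in the domain of A_i, writing G = (𝒜⁻¹ ⊗ I + τ·diag(A_i)) W, one has the a priori bound |W|_𝒟 ≤ α⁻¹ |G|_𝒟, where |W|²_𝒟 = Σ_i d_i |W_i|². -/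
open RealInnerProductSpace

open Matrix

/-- A matrix with nonnegative quadratic form pairs nonnegatively with any Gram matrix. -/
lemma key_psd_gram {H : Type*} [NormedAddCommGroup H] [InnerProductSpace ℝ H] {m : ℕ}
    (P : Matrix (Fin m) (Fin m) ℝ)
    (hP : ∀ v : Fin m → ℝ, 0 ≤ ∑ i, ∑ j, P i j * (v i * v j)) (W : Fin m → H) :
    0 ≤ ∑ i, ∑ j, P i j * ⟪W i, W j⟫ := by
  classical
  set S : Matrix (Fin m) (Fin m) ℝ := (2⁻¹ : ℝ) • (P + Pᵀ) with hS
  have hswapv : ∀ v : Fin m → ℝ,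
      ∑ i, ∑ j, Pᵀ i j * (v i * v j) = ∑ i, ∑ j, P i j * (v i * v j) := by
    intro v
    rw [Finset.sum_comm]
    refine Finset.sum_congr rfl fun i _ => Finset.sum_congr rfl fun j _ => ?_
    rw [Matrix.transpose_apply]; ring
  have hSsd : S.PosSemidef := by
    refine Matrix.posSemidef_iff_dotProduct_mulVec.mpr ⟨?_, ?_⟩
    · ext i j
      simp [hS, Matrix.conjTranspose_apply, Matrix.transpose_apply, add_comm]
    · intro x
      have hx : star x = x := by simp
      rw [hx]
      have hdp : dotProduct x (S.mulVec x)
          = 2⁻¹ * ((∑ i, ∑ j, P i j * (x i * x j)) + ∑ i, ∑ j, Pᵀ i j * (x i * x j)) := by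
        calc dotProduct x (S.mulVec x)
            = ∑ i, ∑ j, 2⁻¹ * (P i j * (x i * x j) + Pᵀ i j * (x i * x j)) := by
              simp only [dotProduct, Matrix.mulVec, hS, Matrix.smul_apply,
                Matrix.add_apply, smul_eq_mul, Finset.mul_sum]
              exact Finset.sum_congr rfl fun i _ => Finset.sum_congr rfl fun j _ => by ring
          _ = 2⁻¹ * ∑ i, ∑ j, (P i j * (x i * x j) + Pᵀ i j * (x i * x j)) := by
              rw [Finset.mul_sum]
              exact Finset.sum_congr rfl fun i _ => (Finset.mul_sum _ _ _).symm
          _ = 2⁻¹ * ((∑ i, ∑ j, P i j * (x i * x j)) + ∑ i, ∑ j, Pᵀ i j * (x i * x j)) := by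
              rw [← Finset.sum_add_distrib (f := fun i => ∑ j, P i j * (x i * x j))
                (g := fun i => ∑ j, Pᵀ i j * (x i * x j))]
              congr 1
              exact Finset.sum_congr rfl fun i _ => Finset.sum_add_distrib
      rw [hdp, hswapv x]
      have := hP x
      positivity
  obtain ⟨m', B, hB⟩ := Matrix.posSemidef_iff_eq_sum_vecMulVec.mp hSsd
  have hSentry : ∀ i j, S i j = ∑ k, B k i * B k j := by
    intro i j
    rw [hB]
    simp [Matrix.sum_apply, Matrix.vecMulVec_apply]
  have hswap : ∑ i, ∑ j, Pᵀ i j * ⟪W i, W j⟫ = ∑ i, ∑ j, P i j * ⟪W i, W j⟫ := by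
    rw [Finset.sum_comm]
    refine Finset.sum_congr rfl fun i _ => Finset.sum_congr rfl fun j _ => ?_
    rw [Matrix.transpose_apply, real_inner_comm]
  have hsym : ∑ i, ∑ j, S i j * ⟪W i, W j⟫ = ∑ i, ∑ j, P i j * ⟪W i, W j⟫ := by
    have h1 : ∀ i j, S i j * ⟪W i, W j⟫
        = 2⁻¹ * (P i j * ⟪W i, W j⟫ + Pᵀ i j * ⟪W i, W j⟫) := by
      intro i j
      simp only [hS, Matrix.smul_apply, Matrix.add_apply, smul_eq_mul]
      ring
    simp_rw [h1, ← Finset.mul_sum, Finset.sum_add_distrib]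
    rw [hswap]
    ring
  rw [← hsym]
  have hterm : ∀ k, ∑ i, ∑ j, B k i * B k j * ⟪W i, W j⟫
      = ⟪∑ i, B k i • W i, ∑ j, B k j • W j⟫ := by
    intro k
    rw [sum_inner]
    refine Finset.sum_congr rfl fun i _ => ?_
    rw [inner_sum]
    refine Finset.sum_congr rfl fun j _ => ?_
    rw [real_inner_smul_left, real_inner_smul_right]
    ring
  have hrearr : ∑ i, ∑ j, S i j * ⟪W i, W j⟫
      = ∑ k, ∑ i, ∑ j, B k i * B k j * ⟪W i, W j⟫ := by
    simp_rw [hSentry, Finset.sum_mul]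
    calc ∑ i, ∑ j, ∑ k, B k i * B k j * ⟪W i, W j⟫
        = ∑ i, ∑ k, ∑ j, B k i * B k j * ⟪W i, W j⟫ := by
          exact Finset.sum_congr rfl fun i _ => Finset.sum_comm
      _ = ∑ k, ∑ i, ∑ j, B k i * B k j * ⟪W i, W j⟫ := Finset.sum_comm
  rw [hrearr]
  refine Finset.sum_nonneg fun k _ => ?_
  rw [hterm k]
  exact real_inner_self_nonneg

/-- A priori bound for Runge–Kutta stage equations: coercivity of the coefficient
matrix `𝒜` plus accretivity of the operators `Aᵢ` gives `|W|_𝒟 ≤ α⁻¹ |G|_𝒟` for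
`G = (𝒜⁻¹ ⊗ I + τ diag(Aᵢ)) W`. -/
theorem stmt10
    {H : Type*} [NormedAddCommGroup H] [InnerProductSpace ℝ H]
    {m : ℕ} (𝒜 : Matrix (Fin m) (Fin m) ℝ) (hinv : IsUnit 𝒜.det)
    (d : Fin m → ℝ) (hd : ∀ i, 0 < d i) (α : ℝ) (hα : 0 < α)
    (hcoerc : ∀ v : Fin m → ℝ,
      α * ∑ i, d i * v i * v i ≤ ∑ i, d i * v i * (𝒜⁻¹.mulVec v) i)
    (D : Fin m → Submodule ℝ H) (A : ∀ i, D i →ₗ[ℝ] H)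
    (hacc : ∀ i, ∀ w : D i, 0 ≤ ⟪(w : H), A i w⟫)
    (τ : ℝ) (hτ : 0 < τ)
    (W : ∀ i, D i) (G : Fin m → H)
    (hG : ∀ i, G i = (∑ j, 𝒜⁻¹ i j • ((W j : H))) + τ • A i (W i)) :
    Real.sqrt (∑ i, d i * ‖(W i : H)‖ ^ 2) ≤ α⁻¹ * Real.sqrt (∑ i, d i * ‖G i‖ ^ 2) := by
  classical
  set M : Matrix (Fin m) (Fin m) ℝ := 𝒜⁻¹ with hM
  -- the "shifted" matrix P i j = d i * M i j - α * δ_ij d i has nonnegative quadratic form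
  set P : Matrix (Fin m) (Fin m) ℝ :=
    Matrix.of fun i j => d i * M i j - α * (if i = j then d i else 0) with hP
  have hPq : ∀ v : Fin m → ℝ, 0 ≤ ∑ i, ∑ j, P i j * (v i * v j) := by
    intro v
    have h1 : ∑ i, ∑ j, P i j * (v i * v j)
        = (∑ i, d i * v i * (M.mulVec v) i) - α * ∑ i, d i * v i * v i := by
      rw [Finset.mul_sum, ← Finset.sum_sub_distrib]
      refine Finset.sum_congr rfl fun i _ => ?_
      simp only [hP, Matrix.of_apply, Matrix.mulVec, dotProduct]
      have hx : ∀ x, (d i * M i x - α * if i = x then d i else 0) * (v i * v x)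
          = d i * v i * (M i x * v x) - (if i = x then α * (d i * v i * v i) else 0) := by
        intro x
        split_ifs with h
        · subst h; ring
        · ring
      calc ∑ x, (d i * M i x - α * if i = x then d i else 0) * (v i * v x)
          = ∑ x, (d i * v i * (M i x * v x) - (if i = x then α * (d i * v i * v i) else 0)) :=
            Finset.sum_congr rfl fun x _ => hx x
        _ = d i * v i * ∑ x, M i x * v x - α * (d i * v i * v i) := by
            rw [Finset.sum_sub_distrib, ← Finset.mul_sum, Finset.sum_ite_eq]
            simp
    rw [h1, sub_nonneg]
    exact hcoerc v
  -- `⟪Wᵢ, Gᵢ⟫` expanded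
  have hinnerG : ∀ i, ⟪(W i : H), G i⟫
      = (∑ j, M i j * ⟪(W i : H), ((W j : H))⟫) + τ * ⟪(W i : H), A i (W i)⟫ := by
    intro i
    rw [hG i, inner_add_right]
    congr 1
    · rw [inner_sum]
      exact Finset.sum_congr rfl fun j _ => real_inner_smul_right _ _ _
    · exact real_inner_smul_right _ _ _
  -- key coercivity estimate on the Gram matrix
  have h0 := key_psd_gram P hPq (fun i => (W i : H))
  have hsplit : ∑ i, ∑ j, P i j * ⟪(W i : H), (W j : H)⟫
      = (∑ i, ∑ j, d i * M i j * ⟪(W i : H), (W j : H)⟫)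
        - α * ∑ i, d i * ‖(W i : H)‖ ^ 2 := by
    rw [Finset.mul_sum,
      ← Finset.sum_sub_distrib (f := fun i => ∑ j, d i * M i j * ⟪(W i : H), (W j : H)⟫)
        (g := fun i => α * (d i * ‖(W i : H)‖ ^ 2))]
    refine Finset.sum_congr rfl fun i _ => ?_
    have hx : ∀ j, P i j * ⟪(W i : H), (W j : H)⟫
        = d i * M i j * ⟪(W i : H), (W j : H)⟫
          - (if i = j then α * (d i * ‖(W i : H)‖ ^ 2) else 0) := by
      intro j
      simp only [hP, Matrix.of_apply]
      split_ifs with h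
      · subst h
        rw [real_inner_self_eq_norm_sq]
        ring
      · ring
    calc ∑ j, P i j * ⟪(W i : H), (W j : H)⟫
        = ∑ j, (d i * M i j * ⟪(W i : H), (W j : H)⟫
            - (if i = j then α * (d i * ‖(W i : H)‖ ^ 2) else 0)) :=
          Finset.sum_congr rfl fun j _ => hx j
      _ = (∑ j, d i * M i j * ⟪(W i : H), (W j : H)⟫)
            - ∑ j, (if i = j then α * (d i * ‖(W i : H)‖ ^ 2) else 0) :=
          Finset.sum_sub_distrib _ _
      _ = (∑ j, d i * M i j * ⟪(W i : H), (W j : H)⟫)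
            - α * (d i * ‖(W i : H)‖ ^ 2) := by
          rw [Finset.sum_ite_eq]
          simp
  have hGsum : ∑ i, d i * ⟪(W i : H), G i⟫
      = (∑ i, ∑ j, d i * M i j * ⟪(W i : H), (W j : H)⟫)
        + ∑ i, τ * (d i * ⟪(W i : H), A i (W i)⟫) := by
    calc ∑ i, d i * ⟪(W i : H), G i⟫
        = ∑ i, ((∑ j, d i * M i j * ⟪(W i : H), (W j : H)⟫)
            + τ * (d i * ⟪(W i : H), A i (W i)⟫)) := by
          refine Finset.sum_congr rfl fun i _ => ?_
          rw [hinnerG i, mul_add, Finset.mul_sum]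
          congr 1
          · exact Finset.sum_congr rfl fun j _ => by ring
          · ring
      _ = _ := Finset.sum_add_distrib
  have hkey : α * ∑ i, d i * ‖(W i : H)‖ ^ 2 ≤ ∑ i, d i * ⟪(W i : H), G i⟫ := by
    rw [hGsum]
    have h2 : α * ∑ i, d i * ‖(W i : H)‖ ^ 2
        ≤ ∑ i, ∑ j, d i * M i j * ⟪(W i : H), (W j : H)⟫ := by
      have := h0
      rw [hsplit, sub_nonneg] at this
      exact this
    have h3 : 0 ≤ ∑ i, τ * (d i * ⟪(W i : H), A i (W i)⟫) :=
      Finset.sum_nonneg fun i _ =>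
        mul_nonneg hτ.le (mul_nonneg (hd i).le (hacc i (W i)))
    linarith
  -- Cauchy–Schwarz
  have hCS : ∑ i, d i * ⟪(W i : H), G i⟫
      ≤ Real.sqrt (∑ i, d i * ‖(W i : H)‖ ^ 2) * Real.sqrt (∑ i, d i * ‖G i‖ ^ 2) := by
    have h1 : ∀ i, d i * ⟪(W i : H), G i⟫
        ≤ (Real.sqrt (d i) * ‖(W i : H)‖) * (Real.sqrt (d i) * ‖G i‖) := by
      intro i
      have hle := real_inner_le_norm (W i : H) (G i)
      calc d i * ⟪(W i : H), G i⟫ ≤ d i * (‖(W i : H)‖ * ‖G i‖) :=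
            mul_le_mul_of_nonneg_left hle (hd i).le
        _ = (Real.sqrt (d i) * ‖(W i : H)‖) * (Real.sqrt (d i) * ‖G i‖) := by
            rw [show (Real.sqrt (d i) * ‖(W i : H)‖) * (Real.sqrt (d i) * ‖G i‖)
              = (Real.sqrt (d i) * Real.sqrt (d i)) * (‖(W i : H)‖ * ‖G i‖) by ring,
              Real.mul_self_sqrt (hd i).le]
    calc ∑ i, d i * ⟪(W i : H), G i⟫
        ≤ ∑ i, (Real.sqrt (d i) * ‖(W i : H)‖) * (Real.sqrt (d i) * ‖G i‖) :=
          Finset.sum_le_sum fun i _ => h1 i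
      _ ≤ Real.sqrt (∑ i, (Real.sqrt (d i) * ‖(W i : H)‖) ^ 2)
            * Real.sqrt (∑ i, (Real.sqrt (d i) * ‖G i‖) ^ 2) :=
          Real.sum_mul_le_sqrt_mul_sqrt _ _ _
      _ = Real.sqrt (∑ i, d i * ‖(W i : H)‖ ^ 2) * Real.sqrt (∑ i, d i * ‖G i‖ ^ 2) := by
          congr 2 <;> exact Finset.sum_congr rfl fun i _ => by
            rw [mul_pow, Real.sq_sqrt (hd i).le]
  set a := Real.sqrt (∑ i, d i * ‖(W i : H)‖ ^ 2) with ha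
  set b := Real.sqrt (∑ i, d i * ‖G i‖ ^ 2) with hb
  have ha0 : 0 ≤ a := Real.sqrt_nonneg _
  have hb0 : 0 ≤ b := Real.sqrt_nonneg _
  have hsum0 : 0 ≤ ∑ i, d i * ‖(W i : H)‖ ^ 2 :=
    Finset.sum_nonneg fun i _ => mul_nonneg (hd i).le (sq_nonneg _)
  have ha2 : a * a = ∑ i, d i * ‖(W i : H)‖ ^ 2 := Real.mul_self_sqrt hsum0
  have hmain : α * (a * a) ≤ a * b := by
    rw [ha2]
    exact hkey.trans hCS
  rcases eq_or_lt_of_le ha0 with h | h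
  · rw [← h]
    exact mul_nonneg (inv_nonneg.mpr hα.le) hb0
  · have h4 : α * a ≤ b := by
      have h5 : a * (α * a) ≤ a * b := by nlinarith
      exact le_of_mul_le_mul_left h5 h
    calc a = α⁻¹ * (α * a) := by field_simp
      _ ≤ α⁻¹ * b := mul_le_mul_of_nonneg_left h4 (inv_nonneg.mpr hα.le)
end

section
/- Let X, Y be real Hilbert spaces, Y densely embedded in X, S : Y → X an isometry (‖y‖_Y = |Sy|_X) which is self-adjoint as an operator on X. Let A be a linear operator with Y ⊂ D(A) and |A w| ≤ M_A ‖w‖_Y for w ∈ Y, and suppose S A S⁻¹ = A + B where |Bv| ≤ M_B |v| for all v ∈ X. Then the adjoint A* satisfies |A* w| ≤ (M_A + M_B) ‖w‖_Y for all w ∈ Y (in the domain of A*). -/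
open RealInnerProductSpace

/-- Adjoint bound: if `S` is a self-adjoint isomorphism of `X` defining the `Y`-norm
`‖w‖_Y = ‖S w‖`, `‖A w‖ ≤ M_A ‖S w‖`, and `S A S⁻¹ = A + B` with `‖B v‖ ≤ M_B ‖v‖`,
then any `z` satisfying the adjoint relation `(z, v) = (w, A v)` obeys
`‖z‖ ≤ (M_A + M_B) * ‖S w‖`. -/
theorem stmt11
    {X : Type*} [NormedAddCommGroup X] [InnerProductSpace ℝ X]
    (S : X ≃ₗ[ℝ] X)
    (hSsa : ∀ x y : X, ⟪S x, y⟫ = ⟪x, S y⟫)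
    (hle : ∀ y : X, ‖y‖ ≤ ‖S y‖)
    (A B : X →ₗ[ℝ] X) (M_A M_B : ℝ)
    (hA : ∀ w : X, ‖A w‖ ≤ M_A * ‖S w‖)
    (hcomm : ∀ v : X, S (A (S.symm v)) = A v + B v)
    (hB : ∀ v : X, ‖B v‖ ≤ M_B * ‖v‖)
    (w z : X)
    (hadj : ∀ v : X, ⟪z, v⟫ = ⟪w, A v⟫) :
    ‖z‖ ≤ (M_A + M_B) * ‖S w‖ := by
  have key : ∀ v : X, |⟪z, v⟫| ≤ (M_A + M_B) * ‖S w‖ * ‖v‖ := by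
    intro v
    -- S.symm (A v) = A (S.symm v) - S.symm (B v)
    have hsymm : S.symm (A v) = A (S.symm v) - S.symm (B v) := by
      have h := hcomm v
      have : A (S.symm v) = S.symm (A v + B v) := by
        rw [← h, S.symm_apply_apply]
      rw [this, map_add]; abel
    have h1 : ⟪z, v⟫ = ⟪S w, S.symm (A v)⟫ := by
      rw [hadj v, hSsa, S.apply_symm_apply]
    have h2 : ⟪S w, S.symm (B v)⟫ = ⟪w, B v⟫ := by
      rw [hSsa, S.apply_symm_apply]
    rw [h1, hsymm, inner_sub_right, h2]
    have e1 : |⟪S w, A (S.symm v)⟫| ≤ ‖S w‖ * (M_A * ‖v‖) := by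
      calc |⟪S w, A (S.symm v)⟫| ≤ ‖S w‖ * ‖A (S.symm v)‖ := abs_real_inner_le_norm _ _
        _ ≤ ‖S w‖ * (M_A * ‖S (S.symm v)‖) := by
            have := hA (S.symm v)
            nlinarith [norm_nonneg (S w)]
        _ = ‖S w‖ * (M_A * ‖v‖) := by rw [S.apply_symm_apply]
    have e2 : |⟪w, B v⟫| ≤ ‖S w‖ * (M_B * ‖v‖) := by
      calc |⟪w, B v⟫| ≤ ‖w‖ * ‖B v‖ := abs_real_inner_le_norm _ _
        _ ≤ ‖S w‖ * (M_B * ‖v‖) := by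
            apply mul_le_mul (hle w) (hB v) (norm_nonneg _)
            exact norm_nonneg _
    calc |⟪S w, A (S.symm v)⟫ - ⟪w, B v⟫| ≤ |⟪S w, A (S.symm v)⟫| + |⟪w, B v⟫| :=
          abs_sub _ _
      _ ≤ ‖S w‖ * (M_A * ‖v‖) + ‖S w‖ * (M_B * ‖v‖) := add_le_add e1 e2
      _ = (M_A + M_B) * ‖S w‖ * ‖v‖ := by ring
  rcases eq_or_ne z 0 with hz | hz
  · subst hz
    rcases eq_or_ne w 0 with hw | hw
    · simp [hw]
    · have hw' : 0 < ‖w‖ := norm_pos_iff.mpr hw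
      have hk := key w
      simp only [inner_zero_left, abs_zero] at hk
      simp only [norm_zero]
      nlinarith
  · have hz' : 0 < ‖z‖ := norm_pos_iff.mpr hz
    have hk := key z
    have hin : ⟪z, z⟫ = ‖z‖ * ‖z‖ := real_inner_self_eq_norm_mul_norm z
    have habs : ‖z‖ * ‖z‖ ≤ (M_A + M_B) * ‖S w‖ * ‖z‖ := by
      have := le_abs_self (⟪z, z⟫ : ℝ)
      linarith [hin ▸ this, hk]
    exact le_of_mul_le_mul_right habs hz'
end
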